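/- Under the Benjamini–Yekutieli step-up procedure with threshold k = max{ j : π_{(j)} ≤ (j/d) · α / Σ_{l=1}^d l^{-1} }, if the p-values π_1,...,π_d corresponding to the d₀ true null hypotheses are each stochastically larger than or equal to uniform on [0,1], then for any dependence structure among the p-values the false discovery rate of rejecting hypotheses with the k smallest p-values is at most (d₀/d)·α ≤ α. -/

import Mathlib

open MeasureTheory Finset

lemma aux_sum (c : ℝ) (f : ℕ → ℝ) (hf : ∀ l, 0 ≤ f l) :
    ∀ d : ℕ, 1 ≤ d → ((∀ m, 1 ≤ m → m ≤ d → ∑ l ∈ Icc 1 m, f l ≤ m * c) →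
    ∑ l ∈ Icc 1 d, f l / l ≤ c * ((∑ l ∈ Icc 1 d, 1 / (l : ℝ)) - 1)
      + (∑ l ∈ Icc 1 d, f l) / d) := by
  intro d hd
  induction d, hd using Nat.le_induction with
  | base =>
    intro hm
    simp
  | succ n hn ih =>
    intro hm
    have ihn := ih (fun m h1 h2 => hm m h1 (h2.trans (Nat.le_succ n)))
    rw [Finset.sum_Icc_succ_top (by omega), Finset.sum_Icc_succ_top (by omega),
      Finset.sum_Icc_succ_top (by omega)]
    have hS : ∑ l ∈ Icc 1 n, f l ≤ n * c := hm n hn (Nat.le_succ n)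
    have hn1 : (1:ℝ) ≤ n := by exact_mod_cast hn
    have hfn : 0 ≤ f (n+1) := hf _
    have h1 : (0:ℝ) < n := by linarith
    have h2 : (0:ℝ) < (n:ℝ)+1 := by linarith
    have key : (∑ l ∈ Icc 1 n, f l) / n + f (n+1) / (n+1)
        ≤ c / (n+1) + ((∑ l ∈ Icc 1 n, f l) + f (n+1)) / (n+1) := by
      rw [div_add_div _ _ (ne_of_gt h1) (ne_of_gt h2), div_add_div _ _ (ne_of_gt h2) (ne_of_gt h2)]
      rw [div_le_div_iff₀ (by positivity) (by positivity)]
      ring_nf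
      nlinarith [hS, hfn]
    push_cast
    have expand : c * ((∑ l ∈ Icc 1 n, 1 / (l:ℝ)) + 1/((n:ℝ)+1) - 1)
        = c * ((∑ l ∈ Icc 1 n, 1 / (l:ℝ)) - 1) + c/((n:ℝ)+1) := by ring
    linarith [ihn, key, expand]

set_option maxHeartbeats 1000000 in
/-- the Benjamini–Yekutieli step-up procedure with harmonic correction
controls the FDR at level (d₀/d)·α ≤ α under arbitrary dependence, provided the
p-values of true nulls are stochastically larger than uniform. -/
theorem stmt_18 {Ω : Type*} [MeasurableSpace Ω] (ℙ : Measure Ω) [IsProbabilityMeasure ℙ]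
    (d d0 : ℕ) (hd : 1 ≤ d) (α : ℝ) (hα0 : 0 < α) (hα1 : α ≤ 1)
    (π : Fin d → Ω → ℝ) (hmeas : ∀ i, Measurable (π i))
    (trueNull : Finset (Fin d)) (hd0 : trueNull.card = d0)
    (hnull : ∀ i ∈ trueNull, ∀ t : ℝ, 0 ≤ t → t ≤ 1 →
      ℙ {ω | π i ω ≤ t} ≤ ENNReal.ofReal t)
    (H : ℝ) (hH : H = ∑ l ∈ Finset.Icc 1 d, (1 : ℝ) / l)
    (thr : ℕ → ℝ) (hthr : ∀ j, thr j = (j : ℝ) / d * α / H)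
    (K : Ω → ℕ)
    (hK : ∀ ω, K ω = ((Finset.range (d + 1)).filter
      (fun j => j ≤ (Finset.univ.filter (fun i : Fin d => π i ω ≤ thr j)).card)).sup id)
    (V R : Ω → ℕ)
    (hV : ∀ ω, V ω = (trueNull.filter (fun i => π i ω ≤ thr (K ω))).card)
    (hR : ∀ ω, R ω = (Finset.univ.filter (fun i : Fin d => π i ω ≤ thr (K ω))).card) :
    (∫ ω, (V ω : ℝ) / max (R ω : ℝ) 1 ∂ℙ) ≤ (d0 : ℝ) / d * α ∧
    (d0 : ℝ) / d * α ≤ α := by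
  have hd0le : d0 ≤ d := by
    rw [← hd0]
    simpa using Finset.card_le_univ trueNull
  have hdR : (0:ℝ) < d := by exact_mod_cast hd
  have hH1 : (1:ℝ) ≤ H := by
    rw [hH]
    calc (1:ℝ) = ∑ l ∈ Icc (1:ℕ) 1, 1/(l:ℝ) := by simp
    _ ≤ ∑ l ∈ Icc 1 d, 1/(l:ℝ) := by
        apply Finset.sum_le_sum_of_subset_of_nonneg
        · exact Finset.Icc_subset_Icc le_rfl hd
        · intro l _ _; positivity
  have hH0 : (0:ℝ) < H := lt_of_lt_of_le one_pos hH1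
  set c : ℝ := α / (d * H) with hc_def
  have hc : 0 < c := div_pos hα0 (by positivity)
  have hthr' : ∀ j, thr j = j * c := by
    intro j; rw [hthr, hc_def]; field_simp
  have hthr0 : thr 0 = 0 := by rw [hthr']; simp
  have hthr_le_one : ∀ m, m ≤ d → thr m ≤ 1 := by
    intro m hm
    rw [hthr']
    have hmR : (m:ℝ) ≤ d := by exact_mod_cast hm
    have h1 : (m:ℝ) * c ≤ d * c := by nlinarith
    have h2 : (d:ℝ) * c = α / H := by rw [hc_def]; field_simp
    have h3 : α / H ≤ α := by
      rw [div_le_iff₀ hH0]; nlinarith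
    linarith
  have hthr_nonneg : ∀ m, 0 ≤ thr m := by
    intro m; rw [hthr']; positivity
  -- sets
  set A : Fin d → ℕ → Set Ω := fun i l => {ω | thr (l-1) < π i ω ∧ π i ω ≤ thr l} with hA_def
  set B : Fin d → Set Ω := fun i => {ω | π i ω ≤ 0} with hB_def
  have hA : ∀ i l, MeasurableSet (A i l) := fun i l =>
    (measurableSet_lt measurable_const (hmeas i)).inter (measurableSet_le (hmeas i) measurable_const)
  have hB : ∀ i, MeasurableSet (B i) := fun i => measurableSet_le (hmeas i) measurable_const
  set g : Ω → ℝ := fun ω => ∑ i ∈ trueNull,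
    ((∑ l ∈ Icc 1 d, (A i l).indicator (fun _ => (l:ℝ)⁻¹) ω)
      + (B i).indicator (fun _ => (1:ℝ)) ω) with hg_def
  have hint : Integrable g ℙ := by
    apply integrable_finset_sum
    intro i _
    apply Integrable.add
    · apply integrable_finset_sum
      intro l _
      exact (integrable_const _).indicator (hA i l)
    · exact (integrable_const _).indicator (hB i)
  -- key facts about K
  have hKfacts : ∀ ω, K ω ≤ d ∧ K ω ≤ R ω := by
    intro ω
    set S := (Finset.range (d + 1)).filter
      (fun j => j ≤ (Finset.univ.filter (fun i : Fin d => π i ω ≤ thr j)).card) with hS_def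
    have h0 : 0 ∈ S := by
      rw [hS_def]
      exact Finset.mem_filter.2 ⟨Finset.mem_range.2 (by omega), Nat.zero_le _⟩
    obtain ⟨b, hbS, hb⟩ := Finset.exists_mem_eq_sup S ⟨0, h0⟩ id
    have hKb : K ω = b := by rw [hK ω, ← hS_def, hb]; rfl
    rw [hS_def, Finset.mem_filter, Finset.mem_range] at hbS
    constructor
    · omega
    · rw [hR ω, hKb]; exact hbS.2
  -- pointwise bound
  have hpt : ∀ ω, (V ω : ℝ) / max (R ω : ℝ) 1 ≤ g ω := by
    intro ω
    have hmax1 : (1:ℝ) ≤ max (R ω : ℝ) 1 := le_max_right _ _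
    have hmax0 : (0:ℝ) < max (R ω : ℝ) 1 := lt_of_lt_of_le one_pos hmax1
    rw [hV ω]
    have hcast : ((trueNull.filter (fun i => π i ω ≤ thr (K ω))).card : ℝ)
        = ∑ i ∈ trueNull, if π i ω ≤ thr (K ω) then (1:ℝ) else 0 := by
      rw [Finset.card_filter]
      push_cast
      rfl
    rw [hcast, Finset.sum_div, hg_def]
    apply Finset.sum_le_sum
    intro i hi
    have hsum_nonneg : 0 ≤ ∑ l ∈ Icc 1 d, (A i l).indicator (fun _ => (l:ℝ)⁻¹) ω :=
      Finset.sum_nonneg fun l _ => Set.indicator_nonneg (fun _ _ => by positivity) ω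
    have hB_nonneg : 0 ≤ (B i).indicator (fun _ => (1:ℝ)) ω :=
      Set.indicator_nonneg (fun _ _ => by norm_num) ω
    by_cases hple : π i ω ≤ thr (K ω)
    · rw [if_pos hple]
      by_cases hneg : π i ω ≤ 0
      · have hBi : (B i).indicator (fun _ => (1:ℝ)) ω = 1 :=
          Set.indicator_of_mem (by rw [hB_def]; exact hneg) _
        have h1 : (1:ℝ) / max (R ω : ℝ) 1 ≤ 1 := by
          rw [div_le_one hmax0]; exact hmax1
        linarith
      · push_neg at hneg
        set l : ℕ := ⌈π i ω / c⌉₊ with hl_def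
        have hx : 0 < π i ω / c := div_pos hneg hc
        have hl1 : 1 ≤ l := by
          rw [hl_def]
          exact Nat.one_le_ceil_iff.2 hx
        have hKc : π i ω ≤ (K ω : ℝ) * c := by rw [← hthr']; exact hple
        have hlK : l ≤ K ω := by
          rw [hl_def]
          apply Nat.ceil_le.2
          rw [div_le_iff₀ hc]
          exact hKc
        have hld : l ≤ d := hlK.trans (hKfacts ω).1
        have hmem : ω ∈ A i l := by
          rw [hA_def]
          constructor
          · rw [hthr']
            have : ((l - 1 : ℕ) : ℝ) < π i ω / c := by
              apply Nat.lt_ceil.1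
              omega
            calc ((l-1:ℕ):ℝ) * c < (π i ω / c) * c := by nlinarith
            _ = π i ω := by field_simp
          · rw [hthr']
            have : π i ω / c ≤ (l : ℝ) := Nat.le_ceil _
            calc π i ω = (π i ω / c) * c := by field_simp
            _ ≤ (l:ℝ) * c := by nlinarith
        have hterm : (l:ℝ)⁻¹ ≤ ∑ l' ∈ Icc 1 d, (A i l').indicator (fun _ => (l':ℝ)⁻¹) ω := by
          rw [← Set.indicator_of_mem hmem (fun _ => (l:ℝ)⁻¹)]
          exact Finset.single_le_sum
            (f := fun l' => (A i l').indicator (fun _ => (l':ℝ)⁻¹) ω)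
            (fun l' _ => Set.indicator_nonneg (fun _ _ => by positivity) ω)
            (Finset.mem_Icc.2 ⟨hl1, hld⟩)
        have hRl : (l:ℝ) ≤ max (R ω : ℝ) 1 := by
          have : l ≤ R ω := hlK.trans (hKfacts ω).2
          have : (l:ℝ) ≤ (R ω : ℝ) := by exact_mod_cast this
          exact this.trans (le_max_left _ _)
        have hlpos : (0:ℝ) < l := by exact_mod_cast hl1
        have h1 : (1:ℝ) / max (R ω : ℝ) 1 ≤ (l:ℝ)⁻¹ := by
          rw [← one_div]
          exact one_div_le_one_div_of_le hlpos hRl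
        linarith
    · rw [if_neg hple, zero_div]
      linarith
  -- integral bound
  have hIntLe : (∫ ω, (V ω : ℝ) / max (R ω : ℝ) 1 ∂ℙ) ≤ ∫ ω, g ω ∂ℙ := by
    apply integral_mono_of_nonneg (Filter.Eventually.of_forall ?_) hint
      (Filter.Eventually.of_forall hpt)
    intro ω
    have : (0:ℝ) ≤ (V ω : ℝ) := Nat.cast_nonneg _
    positivity
  -- compute integral of g
  have hIg : ∫ ω, g ω ∂ℙ = ∑ i ∈ trueNull,
      ((∑ l ∈ Icc 1 d, (ℙ (A i l)).toReal * (l:ℝ)⁻¹) + (ℙ (B i)).toReal) := by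
    rw [hg_def, integral_finset_sum]
    · apply Finset.sum_congr rfl
      intro i _
      rw [integral_add, integral_finset_sum]
      · congr 1
        · apply Finset.sum_congr rfl
          intro l _
          rw [integral_indicator_const _ (hA i l)]
          simp [smul_eq_mul, Measure.real]
        · rw [integral_indicator_const _ (hB i)]
          simp [Measure.real]
      · intro l _
        exact (integrable_const _).indicator (hA i l)
      · apply integrable_finset_sum
        intro l _
        exact (integrable_const _).indicator (hA i l)
      · exact (integrable_const _).indicator (hB i)
    · intro i _
      apply Integrable.add
      · apply integrable_finset_sum
        intro l _
        exact (integrable_const _).indicator (hA i l)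
      · exact (integrable_const _).indicator (hB i)
  -- null p-value measure bounds
  have hF0 : ∀ i ∈ trueNull, ℙ {ω | π i ω ≤ (0:ℝ)} = 0 := by
    intro i hi
    have := hnull i hi 0 le_rfl (by norm_num)
    simpa using this
  have hBzero : ∀ i ∈ trueNull, (ℙ (B i)).toReal = 0 := by
    intro i hi
    rw [hB_def]
    simp [hF0 i hi]
  have hFbound : ∀ i ∈ trueNull, ∀ m, m ≤ d →
      (ℙ {ω | π i ω ≤ thr m}).toReal ≤ m * c := by
    intro i hi m hm
    have h := hnull i hi (thr m) (hthr_nonneg m) (hthr_le_one m hm)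
    have h2 := ENNReal.toReal_le_of_le_ofReal (hthr_nonneg m) h
    rw [hthr' m] at h2 ⊢
    exact h2
  -- telescoping partial sum bound
  have hPartial : ∀ i ∈ trueNull, ∀ m, 1 ≤ m → m ≤ d →
      ∑ l ∈ Icc 1 m, (ℙ (A i l)).toReal ≤ m * c := by
    intro i hi m hm1 hmd
    set F : ℕ → ℝ := fun j => (ℙ {ω | π i ω ≤ thr j}).toReal with hF_def
    have hstep : ∀ l, 1 ≤ l → (ℙ (A i l)).toReal = F l - F (l-1) := by
      intro l hl
      have hthr_mono : thr (l-1) ≤ thr l := by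
        rw [hthr', hthr']
        have : ((l-1:ℕ):ℝ) ≤ (l:ℝ) := by exact_mod_cast Nat.sub_le l 1
        nlinarith
      have hunion : {ω | π i ω ≤ thr l} = {ω | π i ω ≤ thr (l-1)} ∪ A i l := by
        rw [hA_def]
        ext ω
        simp only [Set.mem_setOf_eq, Set.mem_union]
        constructor
        · intro h
          rcases le_or_gt (π i ω) (thr (l-1)) with h'|h'
          · exact Or.inl h'
          · exact Or.inr ⟨h', h⟩
        · rintro (h|⟨_, h⟩)
          · exact h.trans hthr_mono
          · exact h
      have hdisj : Disjoint {ω | π i ω ≤ thr (l-1)} (A i l) := by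
        rw [hA_def, Set.disjoint_left]
        intro ω h1 h2
        exact absurd h1 (not_le.2 h2.1)
      have := measure_union (μ := ℙ) hdisj (hA i l)
      rw [← hunion] at this
      rw [hF_def]
      simp only
      rw [this, ENNReal.toReal_add (measure_ne_top _ _) (measure_ne_top _ _)]
      ring
    have hteles : ∀ m' : ℕ, ∑ l ∈ Icc 1 m', (ℙ (A i l)).toReal = F m' - F 0 := by
      intro m'
      induction m' with
      | zero => simp
      | succ n ih =>
        rw [Finset.sum_Icc_succ_top (by omega), ih, hstep (n+1) (by omega)]
        simp only [Nat.add_sub_cancel]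
        ring
    have hteles := hteles m
    have hF00 : F 0 = 0 := by
      rw [hF_def]
      simp only
      rw [hthr0]
      simp [hF0 i hi]
    rw [hteles, hF00, sub_zero]
    exact hFbound i hi m hmd
  -- apply aux_sum per null hypothesis
  have hPer : ∀ i ∈ trueNull,
      (∑ l ∈ Icc 1 d, (ℙ (A i l)).toReal * (l:ℝ)⁻¹) + (ℙ (B i)).toReal ≤ α / d := by
    intro i hi
    have haux := aux_sum c (fun l => (ℙ (A i l)).toReal) (fun l => ENNReal.toReal_nonneg) d hd
      (hPartial i hi)
    have hform : ∑ l ∈ Icc 1 d, (ℙ (A i l)).toReal * (l:ℝ)⁻¹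
        = ∑ l ∈ Icc 1 d, (ℙ (A i l)).toReal / l := by
      apply Finset.sum_congr rfl
      intro l _
      rw [div_eq_mul_inv]
    have hSd : (∑ l ∈ Icc 1 d, (ℙ (A i l)).toReal) / d ≤ c := by
      rw [div_le_iff₀ hdR]
      have := hPartial i hi d hd le_rfl
      linarith [this]
    have hcH : c * H = α / d := by
      rw [hc_def]
      field_simp
    rw [hBzero i hi, add_zero, hform]
    calc ∑ l ∈ Icc 1 d, (ℙ (A i l)).toReal / l
        ≤ c * ((∑ l ∈ Icc 1 d, 1/(l:ℝ)) - 1) + (∑ l ∈ Icc 1 d, (ℙ (A i l)).toReal) / d := haux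
      _ ≤ c * (H - 1) + c := by rw [hH]; linarith only [haux, hSd]
      _ = c * H := by ring
      _ = α / d := hcH
  constructor
  · calc (∫ ω, (V ω : ℝ) / max (R ω : ℝ) 1 ∂ℙ) ≤ ∫ ω, g ω ∂ℙ := hIntLe
      _ = ∑ i ∈ trueNull,
          ((∑ l ∈ Icc 1 d, (ℙ (A i l)).toReal * (l:ℝ)⁻¹) + (ℙ (B i)).toReal) := hIg
      _ ≤ ∑ _i ∈ trueNull, α / d := Finset.sum_le_sum hPer
      _ = d0 * (α / d) := by rw [Finset.sum_const, hd0]; simp [nsmul_eq_mul]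
      _ = (d0 : ℝ) / d * α := by ring
  · have hle1 : (d0:ℝ)/d ≤ 1 := by
      rw [div_le_one hdR]
      exact_mod_cast hd0le
    nlinarith
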